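/- (Main Theorem, 'only if' direction) Suppose a probabilistic model (A, A₊, u_A) can be embedded into the quantum model Q_n for some n. Then there exist m ∈ ℕ and a real-linear subspace J of the m×m complex Hermitian matrices such that I ∈ J, J is closed under the Jordan product x∘y := ½(xy + yx), and there is a real-linear bijection T : A → J satisfying T(u_A) = I and T(A₊) = {x² : x ∈ J}. In other words, A is order-isomorphic to a Euclidean special Jordan algebra (realized as a Jordan subalgebra of Hermitian matrices) with its cone of squares. -/

import Mathlib

open Module
open scoped ComplexOrder

/-- A probabilistic model `(A, A₊, u_A)`: a finite-dimensional real vector space `A`,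
a closed generating pointed convex cone `A₊`, and an order unit `u_A ∈ A₊`. -/
structure ProbModel (V : Type) [NormedAddCommGroup V] [NormedSpace ℝ V]
    [FiniteDimensional ℝ V] where
  pos : Set V
  unit : V
  add_mem : ∀ x ∈ pos, ∀ y ∈ pos, x + y ∈ pos
  smul_mem : ∀ c : ℝ, 0 ≤ c → ∀ x ∈ pos, c • x ∈ pos
  pointed : ∀ x ∈ pos, -x ∈ pos → x = 0
  closed : IsClosed pos
  spanning : Submodule.span ℝ pos = ⊤
  unit_mem : unit ∈ pos
  orderUnit : ∀ v : V, ∃ t : ℝ, 0 ≤ t ∧ t • unit - v ∈ pos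

/-- The dual cone `A₊* = {ω ∈ A* : ω(e) ≥ 0 for all e ∈ A₊}`. -/
def ProbModel.dualPos {V : Type} [NormedAddCommGroup V] [NormedSpace ℝ V]
    [FiniteDimensional ℝ V] (M : ProbModel V) : Set (Dual ℝ V) :=
  {ω | ∀ e ∈ M.pos, 0 ≤ ω e}

/-- An embedding `(φ, ψ)` of a probabilistic model `M` into a probabilistic model `N`. -/
structure ModelEmbedding {V W : Type} [NormedAddCommGroup V] [NormedSpace ℝ V]
    [FiniteDimensional ℝ V] [NormedAddCommGroup W] [NormedSpace ℝ W]
    [FiniteDimensional ℝ W] (M : ProbModel V) (N : ProbModel W) where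
  φ : V →ₗ[ℝ] W
  ψ : Dual ℝ V →ₗ[ℝ] Dual ℝ W
  φ_pos : ∀ a ∈ M.pos, φ a ∈ N.pos
  ψ_pos : ∀ ω ∈ M.dualPos, ψ ω ∈ N.dualPos
  φ_unit : φ M.unit = N.unit
  pairing : ∀ (ω : Dual ℝ V) (e : V), ψ ω (φ e) = ω e

/-- An embedding `(φ, ψ)` of a probabilistic model `M` into the `n`-level quantum
model `Q_n`, whose effect space is the real vector space of `n × n` complex Hermitian
matrices with the cone of positive-semidefinite matrices and unit effect `I`; the dual
is identified with the same space via the trace pairing `(ω, e) = tr(ω·e)`. -/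
structure QEmbedding {V : Type} [NormedAddCommGroup V] [NormedSpace ℝ V]
    [FiniteDimensional ℝ V] (M : ProbModel V) (n : ℕ) where
  φ : V →ₗ[ℝ] Matrix (Fin n) (Fin n) ℂ
  ψ : Dual ℝ V →ₗ[ℝ] Matrix (Fin n) (Fin n) ℂ
  φ_herm : ∀ a : V, (φ a).IsHermitian
  ψ_herm : ∀ ω : Dual ℝ V, (ψ ω).IsHermitian
  φ_pos : ∀ a ∈ M.pos, (φ a).PosSemidef
  ψ_pos : ∀ ω ∈ M.dualPos, (ψ ω).PosSemidef
  φ_unit : φ M.unit = 1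
  pairing : ∀ (ω : Dual ℝ V) (e : V), (ψ ω * φ e).trace = (ω e : ℂ)

/-- The Jordan product `x ∘ y := ½(xy + yx)` of matrices. -/
noncomputable def jordan {n : ℕ} (x y : Matrix (Fin n) (Fin n) ℂ) : Matrix (Fin n) (Fin n) ℂ :=
  (1 / 2 : ℂ) • (x * y + y * x)

namespace JordanAux

open Matrix

variable {k : ℕ}

/-- diagonal entries of a PSD matrix are nonnegative (in the complex order). -/
lemma psd_diag_nonneg {A : Matrix (Fin k) (Fin k) ℂ} (hA : A.PosSemidef) (i : Fin k) :
    0 ≤ A i i := by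
  exact hA.diag_nonneg

lemma psd_trace_nonneg {A : Matrix (Fin k) (Fin k) ℂ} (hA : A.PosSemidef) :
    0 ≤ A.trace := by
  rw [Matrix.trace]
  exact Finset.sum_nonneg fun i _ => psd_diag_nonneg hA i

/-- a PSD matrix with zero diagonal is zero. -/
lemma psd_eq_zero_of_diag_zero {A : Matrix (Fin k) (Fin k) ℂ} (hA : A.PosSemidef)
    (h : ∀ i, A i i = 0) : A = 0 := by
  have hcol : ∀ i, A *ᵥ Pi.single i 1 = 0 := by
    intro i
    rw [← hA.dotProduct_mulVec_zero_iff]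
    simpa [Matrix.mulVec_single, dotProduct, Pi.single_apply, Finset.sum_ite_eq] using h i
  ext j i
  have := congrFun (hcol i) j
  simpa [Matrix.mulVec_single] using this

lemma psd_trace_eq_zero_iff {A : Matrix (Fin k) (Fin k) ℂ} (hA : A.PosSemidef) :
    A.trace = 0 ↔ A = 0 := by
  constructor
  · intro h
    refine psd_eq_zero_of_diag_zero hA fun i => ?_
    have hsum : ∑ i, A i i = 0 := h
    have := (Finset.sum_eq_zero_iff_of_nonneg (fun i _ => psd_diag_nonneg hA i)).mp hsum
    exact this i (Finset.mem_univ i)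
  · rintro rfl; simp

open scoped MatrixOrder in
lemma psd_sqrt_exists {A : Matrix (Fin k) (Fin k) ℂ} (hA : A.PosSemidef) :
    ∃ S : Matrix (Fin k) (Fin k) ℂ, S.PosSemidef ∧ S * S = A :=
  ⟨CFC.sqrt A, Matrix.nonneg_iff_posSemidef.mp (CFC.sqrt_nonneg A),
    CFC.sqrt_mul_sqrt_self A (Matrix.nonneg_iff_posSemidef.mpr hA)⟩

lemma psd_trace_mul_nonneg {A B : Matrix (Fin k) (Fin k) ℂ} (hA : A.PosSemidef)
    (hB : B.PosSemidef) : 0 ≤ (A * B).trace := by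
  obtain ⟨S, hS, hSS⟩ := psd_sqrt_exists hB
  have h1 : A * B = A * S * S := by
    rw [Matrix.mul_assoc, hSS]
  have h2 : (A * S * S).trace = (S * A * S).trace := by
    rw [Matrix.trace_mul_cycle]
  have h3 : (S * A * S).PosSemidef := by
    have := hA.conjTranspose_mul_mul_same S
    rwa [hS.1] at this
  rw [h1, h2]
  exact psd_trace_nonneg h3

/-- if `A` and `-A` are PSD then `A = 0`. -/
lemma psd_neg_psd_eq_zero {A : Matrix (Fin k) (Fin k) ℂ} (hA : A.PosSemidef)
    (hA' : (-A).PosSemidef) : A = 0 := by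
  refine psd_eq_zero_of_diag_zero hA fun i => ?_
  have h1 := psd_diag_nonneg hA i
  have h2 := psd_diag_nonneg hA' i
  simp only [Matrix.neg_apply] at h2
  exact le_antisymm (neg_nonneg.mp h2) h1

/-- trace of product of two Hermitian matrices is real. -/
lemma trace_mul_herm_real {A B : Matrix (Fin k) (Fin k) ℂ} (hA : A.IsHermitian)
    (hB : B.IsHermitian) : (((A * B).trace).re : ℂ) = (A * B).trace := by
  have h : star ((A * B).trace) = (A * B).trace := by
    rw [← Matrix.trace_conjTranspose, Matrix.conjTranspose_mul, hA.eq, hB.eq,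
      Matrix.trace_mul_comm]
  rw [Complex.conj_eq_iff_re.mp h]

lemma herm_trace_real {A : Matrix (Fin k) (Fin k) ℂ} (hA : A.IsHermitian) :
    ((A.trace).re : ℂ) = A.trace := by
  have h : star (A.trace) = A.trace := by
    rw [← Matrix.trace_conjTranspose, hA.eq]
  rw [Complex.conj_eq_iff_re.mp h]

end JordanAux

namespace JordanAux

variable {V : Type} [NormedAddCommGroup V] [NormedSpace ℝ V] [FiniteDimensional ℝ V]

lemma pos_zero_mem (M : ProbModel V) : (0 : V) ∈ M.pos := by
  have := M.smul_mem 0 le_rfl M.unit M.unit_mem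
  simpa using this

lemma pos_convex (M : ProbModel V) : Convex ℝ M.pos := by
  intro x hx y hy a b ha hb _
  exact M.add_mem _ (M.smul_mem a ha x hx) _ (M.smul_mem b hb y hy)

/-- bidual: if all dual-positive functionals are nonnegative at `v`, then `v ∈ pos`. -/
lemma mem_pos_of_dual (M : ProbModel V) {v : V}
    (h : ∀ ω ∈ M.dualPos, 0 ≤ ω v) : v ∈ M.pos := by
  by_contra hv
  obtain ⟨f, u, hfv, hfs⟩ := geometric_hahn_banach_point_closed (pos_convex M) M.closed hv
  have hu0 : u < 0 := by simpa using hfs 0 (pos_zero_mem M)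
  have hfpos : ∀ e ∈ M.pos, 0 ≤ f e := by
    intro e he
    by_contra hfe
    push_neg at hfe
    have ht : (0:ℝ) ≤ (u - 1) / f e := le_of_lt (div_pos_of_neg_of_neg (by linarith) hfe)
    have hmem := M.smul_mem _ ht e he
    have := hfs _ hmem
    rw [map_smul] at this
    rw [smul_eq_mul, div_mul_cancel₀ _ (ne_of_lt hfe)] at this
    linarith
  have hω : (f : V →ₗ[ℝ] ℝ) ∈ M.dualPos := fun e he => hfpos e he
  have := h _ hω
  simp only [ContinuousLinearMap.coe_coe] at this
  linarith

lemma eq_of_forall_dual_eq {a b : V} (h : ∀ ω : Dual ℝ V, ω a = ω b) : a = b := by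
  have : ∀ ω : Dual ℝ V, ω (a - b) = 0 := by intro ω; rw [map_sub, h ω, sub_self]
  exact sub_eq_zero.mp ((Module.forall_dual_apply_eq_zero_iff ℝ (a - b)).mp this)

/-- the dual cone spans the dual space. -/
lemma span_dualPos (M : ProbModel V) : Submodule.span ℝ M.dualPos = ⊤ := by
  by_contra hne
  obtain ⟨Φ, hΦne, hΦ⟩ := Submodule.exists_dual_map_eq_bot_of_lt_top
    (lt_top_iff_ne_top.mpr hne) inferInstance
  set v : V := (Module.evalEquiv ℝ V).symm Φ with hv
  have hvval : ∀ ω : Dual ℝ V, ω v = Φ ω := by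
    intro ω
    have : Module.evalEquiv ℝ V v = Φ := by rw [hv, LinearEquiv.apply_symm_apply]
    rw [← this]
    rfl
  have hvz : ∀ ω ∈ M.dualPos, ω v = 0 := by
    intro ω hω
    rw [hvval]
    have : Φ ω ∈ (Submodule.span ℝ M.dualPos).map Φ := ⟨ω, Submodule.subset_span hω, rfl⟩
    rw [hΦ] at this
    simpa using this
  have hvpos : v ∈ M.pos := mem_pos_of_dual M fun ω hω => le_of_eq (hvz ω hω).symm
  have hvneg : -v ∈ M.pos := mem_pos_of_dual M fun ω hω => by
    rw [map_neg, hvz ω hω, neg_zero]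
  have : v = 0 := M.pointed v hvpos hvneg
  apply hΦne
  have : Φ = Module.evalEquiv ℝ V v := (LinearEquiv.apply_symm_apply _ _).symm
  rw [this, ‹v = 0›, map_zero]

/-- dual order-unit bound: a strictly positive functional dominates every dual-positive one. -/
lemma exists_smul_sub_mem_dualPos (M : ProbModel V) {τ σ : Dual ℝ V}
    (hτ : ∀ e ∈ M.pos, e ≠ 0 → 0 < τ e) (hσ : σ ∈ M.dualPos) :
    ∃ c : ℝ, 0 ≤ c ∧ c • τ - σ ∈ M.dualPos := by
  classical
  set K := M.pos ∩ Metric.sphere (0 : V) 1 with hK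
  have hKc : IsCompact K := (isCompact_sphere 0 1).inter_left M.closed
  by_cases hKe : K = ∅
  · refine ⟨0, le_rfl, fun e he => ?_⟩
    have : e = 0 := by
      by_contra hne
      have : ‖e‖⁻¹ • e ∈ K := by
        constructor
        · exact M.smul_mem _ (inv_nonneg.mpr (norm_nonneg e)) e he
        · simp [norm_smul, inv_mul_cancel₀ (norm_ne_zero_iff.mpr hne)]
      rw [hKe] at this
      exact this.elim
    simp [this]
  · have hKne : K.Nonempty := Set.nonempty_iff_ne_empty.mpr hKe
    have hτc : Continuous τ := LinearMap.continuous_of_finiteDimensional τ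
    have hσc : Continuous σ := LinearMap.continuous_of_finiteDimensional σ
    obtain ⟨e₀, he₀K, he₀min⟩ := hKc.exists_isMinOn hKne hτc.continuousOn
    obtain ⟨e₁, he₁K, he₁max⟩ := hKc.exists_isMaxOn hKne hσc.continuousOn
    set t₀ := τ e₀ with ht₀
    have ht₀pos : 0 < t₀ := hτ e₀ he₀K.1 (by
      intro h0; rw [h0] at he₀K; simpa using he₀K.2)
    set c₀ := σ e₁ with hc₀
    refine ⟨max (c₀ / t₀) 0, le_max_right _ _, fun e he => ?_⟩
    by_cases hez : e = 0
    · simp [hez]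
    · have hnorm : (0:ℝ) < ‖e‖ := norm_pos_iff.mpr hez
      set u := ‖e‖⁻¹ • e with hu
      have huK : u ∈ K := by
        constructor
        · exact M.smul_mem _ (inv_nonneg.mpr (norm_nonneg e)) e he
        · simp [hu, norm_smul, inv_mul_cancel₀ (ne_of_gt hnorm)]
      have h1 : σ u ≤ c₀ := he₁max huK
      have h2 : t₀ ≤ τ u := he₀min huK
      have hcu : σ u ≤ max (c₀ / t₀) 0 * τ u := by
        calc σ u ≤ c₀ := h1
        _ = (c₀ / t₀) * t₀ := by field_simp
        _ ≤ max (c₀ / t₀) 0 * t₀ := by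
            apply mul_le_mul_of_nonneg_right (le_max_left _ _) (le_of_lt ht₀pos)
        _ ≤ max (c₀ / t₀) 0 * τ u := by
            apply mul_le_mul_of_nonneg_left h2 (le_max_right _ _)
      have hσu : σ u = ‖e‖⁻¹ * σ e := by rw [hu, map_smul, smul_eq_mul]
      have hτu : τ u = ‖e‖⁻¹ * τ e := by rw [hu, map_smul, smul_eq_mul]
      have hmul := mul_le_mul_of_nonneg_left hcu (norm_nonneg e)
      rw [hσu, hτu] at hmul
      have hne : ‖e‖ ≠ 0 := ne_of_gt hnorm
      field_simp at hmul
      simp only [LinearMap.sub_apply, LinearMap.smul_apply, smul_eq_mul]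
      linarith [hmul]

end JordanAux

namespace JordanAux

open Matrix

variable {V : Type} [NormedAddCommGroup V] [NormedSpace ℝ V] [FiniteDimensional ℝ V]
  {M : ProbModel V} {n : ℕ}

/-- the trace functional `τ = tr ∘ φ` as an element of the dual space. -/
noncomputable def tauD (E : QEmbedding M n) : Dual ℝ V :=
  Complex.reLm.comp ((Matrix.traceLinearMap (Fin n) ℝ ℂ).comp E.φ)

lemma tauD_apply (E : QEmbedding M n) (e : V) : tauD E e = ((E.φ e).trace).re := rfl

lemma tauD_complex (E : QEmbedding M n) (e : V) :
    ((tauD E e : ℝ) : ℂ) = (E.φ e).trace := by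
  rw [tauD_apply]
  exact herm_trace_real (E.φ_herm e)

lemma tauD_mem (E : QEmbedding M n) : tauD E ∈ M.dualPos := by
  intro e he
  rw [tauD_apply]
  have h := psd_trace_nonneg (E.φ_pos e he)
  simpa using (Complex.le_def.mp h).1

lemma pairing_real (E : QEmbedding M n) (ω : Dual ℝ V) (e : V) :
    ((E.ψ ω * E.φ e).trace).re = ω e := by
  rw [E.pairing]
  simp

lemma phi_inj (E : QEmbedding M n) {e : V} (h : E.φ e = 0) : e = 0 := by
  apply (Module.forall_dual_apply_eq_zero_iff ℝ e).mp
  intro ω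
  have := pairing_real E ω e
  rw [h, Matrix.mul_zero, Matrix.trace_zero] at this
  simpa using this.symm

lemma tauD_strict (E : QEmbedding M n) : ∀ e ∈ M.pos, e ≠ 0 → 0 < tauD E e := by
  intro e he hne
  have h0 : 0 ≤ tauD E e := tauD_mem E e he
  rcases lt_or_eq_of_le h0 with h | h
  · exact h
  · exfalso
    have htr : (E.φ e).trace = 0 := by
      rw [← tauD_complex, ← h]; simp
    have := (psd_trace_eq_zero_iff (E.φ_pos e he)).mp htr
    exact hne (phi_inj E this)

/-- `s₀ = ψ τ`. -/
noncomputable def sZero (E : QEmbedding M n) : Matrix (Fin n) (Fin n) ℂ := E.ψ (tauD E)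

lemma sZero_psd (E : QEmbedding M n) : (sZero E).PosSemidef := E.ψ_pos _ (tauD_mem E)

/-- the eigenvalues of `s₀`. -/
noncomputable def ev (E : QEmbedding M n) : Fin n → ℝ := (sZero_psd E).1.eigenvalues

/-- the unitary diagonalizing `s₀`. -/
noncomputable def Ud (E : QEmbedding M n) : Matrix (Fin n) (Fin n) ℂ :=
  ((sZero_psd E).1.eigenvectorUnitary : Matrix (Fin n) (Fin n) ℂ)

/-- the size of the support of `s₀`. -/
noncomputable def mm (E : QEmbedding M n) : ℕ := Fintype.card {l : Fin n // ev E l ≠ 0}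

/-- enumeration of the support of `s₀`. -/
noncomputable def gg (E : QEmbedding M n) : Fin (mm E) → Fin n :=
  fun j => ((Fintype.equivFin {l : Fin n // ev E l ≠ 0}).symm j : {l : Fin n // ev E l ≠ 0}).val

lemma gg_inj (E : QEmbedding M n) : Function.Injective (gg E) := by
  intro a b hab
  exact (Equiv.injective _) (Subtype.ext hab)

lemma ev_gg_pos (E : QEmbedding M n) (j : Fin (mm E)) : 0 < ev E (gg E j) := by
  have h1 : ev E (gg E j) ≠ 0 :=
    ((Fintype.equivFin {l : Fin n // ev E l ≠ 0}).symm j).2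
  have h2 : 0 ≤ ev E (gg E j) := (sZero_psd E).eigenvalues_nonneg _
  exact lt_of_le_of_ne h2 (Ne.symm h1)

/-- the isometry onto the support of `s₀`. -/
noncomputable def Wm (E : QEmbedding M n) : Matrix (Fin n) (Fin (mm E)) ℂ :=
  (Ud E).submatrix id (gg E)

lemma Ud_unitary (E : QEmbedding M n) :
    star (Ud E) * Ud E = 1 ∧ Ud E * star (Ud E) = 1 := by
  constructor
  · exact Matrix.mem_unitaryGroup_iff'.mp ((sZero_psd E).1.eigenvectorUnitary).2
  · exact Matrix.mem_unitaryGroup_iff.mp ((sZero_psd E).1.eigenvectorUnitary).2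

lemma Wm_orth (E : QEmbedding M n) : (Wm E)ᴴ * Wm E = 1 := by
  ext j k
  have h := congrFun (congrFun (congrArg (fun A => (A : Matrix (Fin n) (Fin n) ℂ))
    (Ud_unitary E).1) (gg E j)) (gg E k)
  simp only [Matrix.mul_apply, Matrix.star_apply] at h
  simp only [Matrix.mul_apply, Wm, Matrix.conjTranspose_apply, Matrix.submatrix_apply, id]
  rw [h]
  by_cases hjk : j = k
  · subst hjk; simp [Matrix.one_apply]
  · rw [Matrix.one_apply_ne, Matrix.one_apply_ne hjk]
    exact fun hc => hjk (gg_inj E hc)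

/-- the support projection. -/
noncomputable def pp (E : QEmbedding M n) : Matrix (Fin n) (Fin n) ℂ := Wm E * (Wm E)ᴴ

lemma pp_herm (E : QEmbedding M n) : (pp E).IsHermitian := by
  unfold pp
  exact Matrix.isHermitian_mul_conjTranspose_self _

/-- indicator diagonal matrix of the support. -/
noncomputable def indD (E : QEmbedding M n) : Matrix (Fin n) (Fin n) ℂ :=
  Matrix.diagonal (fun l => if ev E l ≠ 0 then (1 : ℂ) else 0)

lemma sum_support (E : QEmbedding M n) (f : Fin n → ℂ) :
    ∑ j : Fin (mm E), f (gg E j) = ∑ l : Fin n, (if ev E l ≠ 0 then f l else 0) := by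
  classical
  have h1 : ∑ j : Fin (mm E), f (gg E j)
      = ∑ s : {l : Fin n // ev E l ≠ 0}, f s.val :=
    Equiv.sum_comp (Fintype.equivFin {l : Fin n // ev E l ≠ 0}).symm
      (fun s : {l : Fin n // ev E l ≠ 0} => f s.val)
  rw [h1, ← Finset.sum_subtype (Finset.univ.filter (fun l => ev E l ≠ 0))
    (by simp) f, Finset.sum_filter]

lemma pp_eq (E : QEmbedding M n) : pp E = Ud E * indD E * star (Ud E) := by
  ext i i'
  have hL : pp E i i' = ∑ j : Fin (mm E), Ud E i (gg E j) * star (Ud E i' (gg E j)) := by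
    simp [pp, Matrix.mul_apply, Wm, Matrix.conjTranspose_apply]
  have hR : (Ud E * indD E * star (Ud E)) i i'
      = ∑ l : Fin n, (if ev E l ≠ 0 then Ud E i l * star (Ud E i' l) else 0) := by
    rw [Matrix.mul_apply]
    apply Finset.sum_congr rfl
    intro l _
    rw [indD, Matrix.mul_diagonal]
    simp only [Matrix.star_apply]
    by_cases h : ev E l ≠ 0
    · simp [h]
    · push_neg at h; simp [h]
  rw [hL, hR, sum_support E (fun l => Ud E i l * star (Ud E i' l))]

lemma spectral_sZero (E : QEmbedding M n) :
    sZero E = Ud E * Matrix.diagonal (RCLike.ofReal ∘ ev E) * star (Ud E) :=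
  (sZero_psd E).1.spectral_theorem

lemma indD_absorb (E : QEmbedding M n) :
    indD E * Matrix.diagonal (RCLike.ofReal ∘ ev E) = Matrix.diagonal (RCLike.ofReal ∘ ev E) := by
  unfold indD
  rw [Matrix.diagonal_mul_diagonal]
  refine congrArg Matrix.diagonal ?_
  funext l
  simp only [Function.comp_apply]
  by_cases h : ev E l = 0
  · simp [h]
  · simp [h]

lemma pp_mul_sZero (E : QEmbedding M n) : pp E * sZero E = sZero E := by
  rw [pp_eq, spectral_sZero]
  calc Ud E * indD E * star (Ud E) * (Ud E * Matrix.diagonal (RCLike.ofReal ∘ ev E) * star (Ud E))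
      = Ud E * (indD E * ((star (Ud E) * Ud E) * (Matrix.diagonal (RCLike.ofReal ∘ ev E)
        * star (Ud E)))) := by simp only [Matrix.mul_assoc]
    _ = Ud E * (indD E * Matrix.diagonal (RCLike.ofReal ∘ ev E)) * star (Ud E) := by
        rw [(Ud_unitary E).1, Matrix.one_mul]; simp only [Matrix.mul_assoc]
    _ = Ud E * Matrix.diagonal (RCLike.ofReal ∘ ev E) * star (Ud E) := by rw [indD_absorb]

lemma sZero_mul_pp (E : QEmbedding M n) : sZero E * pp E = sZero E := by
  have h1 : (pp E * sZero E)ᴴ = sZero E * pp E := by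
    rw [Matrix.conjTranspose_mul, (pp_herm E).eq, (sZero_psd E).1.eq]
  rw [← h1, pp_mul_sZero, (sZero_psd E).1.eq]

/-- key absorption lemma: a PSD matrix dominated by a multiple of `S` is absorbed by
any Hermitian idempotent-like `p` with `p * S = S`. -/
lemma absorb {k : ℕ} {p S X : Matrix (Fin k) (Fin k) ℂ} (hpS : p * S = S) (hSp : S * p = S)
    (hph : p.IsHermitian) (hX : X.PosSemidef) {c : ℝ} (hle : (c • S - X).PosSemidef) :
    p * X * p = X := by
  set q : Matrix (Fin k) (Fin k) ℂ := 1 - p with hq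
  have hqh : q.IsHermitian := Matrix.isHermitian_one.sub hph
  have hqS : q * S = 0 := by rw [hq, Matrix.sub_mul, Matrix.one_mul, hpS, sub_self]
  have hSq : S * q = 0 := by rw [hq, Matrix.mul_sub, Matrix.mul_one, hSp, sub_self]
  have hY : (q * X * q).PosSemidef := by
    have := hX.conjTranspose_mul_mul_same q
    rwa [hqh.eq] at this
  have hnegY : (-(q * X * q)).PosSemidef := by
    have h1 := hle.conjTranspose_mul_mul_same q
    rw [hqh.eq] at h1
    have h2 : q * (c • S - X) * q = -(q * X * q) := by
      have h3 : q * (c • S - X) * q = c • (q * S * q) - q * X * q := by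
        simp only [Matrix.mul_sub, Matrix.sub_mul, Matrix.mul_smul, Matrix.smul_mul]
      rw [h3, hqS, Matrix.zero_mul, smul_zero, zero_sub]
    rwa [h2] at h1
  have hqXq : q * X * q = 0 := psd_neg_psd_eq_zero hY hnegY
  obtain ⟨S, hS, hSS⟩ := psd_sqrt_exists hX
  have hsq : (S * q)ᴴ * (S * q) = q * X * q := by
    rw [Matrix.conjTranspose_mul, hS.1.eq, hqh.eq]
    calc q * S * (S * q) = q * (S * S) * q := by
          simp only [Matrix.mul_assoc]
      _ = q * X * q := by rw [hSS]
  have hsq0 : S * q = 0 := by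
    rw [← Matrix.conjTranspose_mul_self_eq_zero (A := S * q), hsq, hqXq]
  have hXq : X * q = 0 := by
    rw [← hSS, Matrix.mul_assoc, hsq0, Matrix.mul_zero]
  have hqX : q * X = 0 := by
    have : (X * q)ᴴ = q * X := by rw [Matrix.conjTranspose_mul, hqh.eq, hX.1.eq]
    rw [← this, hXq, Matrix.conjTranspose_zero]
  have hpq : p = 1 - q := by rw [hq, sub_sub_cancel]
  have hpX : p * X = X := by
    rw [hpq, Matrix.sub_mul, Matrix.one_mul, hqX, sub_zero]
  have hXp : X * p = X := by
    rw [hpq, Matrix.mul_sub, Matrix.mul_one, hXq, sub_zero]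
  rw [hpX, hXp]

lemma psi_absorb (E : QEmbedding M n) (ω : Dual ℝ V) :
    pp E * E.ψ ω * pp E = E.ψ ω := by
  have hmem : ω ∈ Submodule.span ℝ M.dualPos := by
    rw [span_dualPos M]; trivial
  induction hmem using Submodule.span_induction with
  | mem σ hσ =>
      obtain ⟨c, hc0, hc⟩ := exists_smul_sub_mem_dualPos M (tauD_strict E) hσ
      have hle : (c • sZero E - E.ψ σ).PosSemidef := by
        have := E.ψ_pos _ hc
        rwa [map_sub, _root_.map_smul] at this
      exact absorb (pp_mul_sZero E) (sZero_mul_pp E) (pp_herm E) (E.ψ_pos σ hσ) hle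
  | zero => simp
  | add x y _ _ hx hy => rw [map_add, Matrix.mul_add, Matrix.add_mul, hx, hy]
  | smul c x _ hx => rw [_root_.map_smul, Matrix.mul_smul, Matrix.smul_mul, hx]

lemma psi_Wm (E : QEmbedding M n) (ω : Dual ℝ V) :
    Wm E * ((Wm E)ᴴ * E.ψ ω * Wm E) * (Wm E)ᴴ = E.ψ ω := by
  have h := psi_absorb E ω
  rw [pp] at h
  calc Wm E * ((Wm E)ᴴ * E.ψ ω * Wm E) * (Wm E)ᴴ
      = Wm E * (Wm E)ᴴ * E.ψ ω * (Wm E * (Wm E)ᴴ) := by simp only [Matrix.mul_assoc]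
    _ = E.ψ ω := h

end JordanAux

namespace JordanAux

open Matrix

variable {V : Type} [NormedAddCommGroup V] [NormedSpace ℝ V] [FiniteDimensional ℝ V]
  {M : ProbModel V} {n : ℕ}

/-- the compressed effect map `φc = Wᴴ φ(·) W`. -/
noncomputable def phiC (E : QEmbedding M n) : V →ₗ[ℝ] Matrix (Fin (mm E)) (Fin (mm E)) ℂ where
  toFun e := (Wm E)ᴴ * E.φ e * Wm E
  map_add' a b := by simp only [map_add, Matrix.mul_add, Matrix.add_mul]
  map_smul' r a := by
    simp only [_root_.map_smul, RingHom.id_apply, Matrix.mul_smul, Matrix.smul_mul]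

/-- the compressed state map `ψc = Wᴴ ψ(·) W`. -/
noncomputable def psiC (E : QEmbedding M n) : Dual ℝ V →ₗ[ℝ] Matrix (Fin (mm E)) (Fin (mm E)) ℂ where
  toFun ω := (Wm E)ᴴ * E.ψ ω * Wm E
  map_add' a b := by simp only [map_add, Matrix.mul_add, Matrix.add_mul]
  map_smul' r a := by
    simp only [_root_.map_smul, RingHom.id_apply, Matrix.mul_smul, Matrix.smul_mul]

lemma phiC_apply (E : QEmbedding M n) (e : V) : phiC E e = (Wm E)ᴴ * E.φ e * Wm E := rfl
lemma psiC_apply (E : QEmbedding M n) (ω : Dual ℝ V) : psiC E ω = (Wm E)ᴴ * E.ψ ω * Wm E := rfl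

lemma phiC_herm (E : QEmbedding M n) (e : V) : (phiC E e).IsHermitian := by
  rw [phiC_apply]
  exact Matrix.isHermitian_conjTranspose_mul_mul (Wm E) (E.φ_herm e)

lemma phiC_psd (E : QEmbedding M n) {e : V} (he : e ∈ M.pos) : (phiC E e).PosSemidef := by
  rw [phiC_apply]
  exact (E.φ_pos e he).conjTranspose_mul_mul_same (Wm E)

lemma psiC_psd (E : QEmbedding M n) {ω : Dual ℝ V} (hω : ω ∈ M.dualPos) :
    (psiC E ω).PosSemidef := by
  rw [psiC_apply]
  exact (E.ψ_pos ω hω).conjTranspose_mul_mul_same (Wm E)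

lemma phiC_unit (E : QEmbedding M n) : phiC E M.unit = 1 := by
  rw [phiC_apply, E.φ_unit, Matrix.mul_one, Wm_orth]

/-- the compressed pairing identity. -/
lemma pairingC (E : QEmbedding M n) (ω : Dual ℝ V) (e : V) :
    (psiC E ω * phiC E e).trace = (ω e : ℂ) := by
  rw [psiC_apply, phiC_apply]
  have h1 : (Wm E)ᴴ * E.ψ ω * Wm E * ((Wm E)ᴴ * E.φ e * Wm E)
      = (Wm E)ᴴ * E.ψ ω * Wm E * (Wm E)ᴴ * E.φ e * Wm E := by
    simp only [Matrix.mul_assoc]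
  rw [h1]
  have h2 : ((Wm E)ᴴ * E.ψ ω * Wm E * (Wm E)ᴴ * E.φ e * Wm E).trace
      = (Wm E * ((Wm E)ᴴ * E.ψ ω * Wm E * (Wm E)ᴴ * E.φ e)).trace := by
    rw [Matrix.trace_mul_comm]
  rw [h2]
  have h3 : Wm E * ((Wm E)ᴴ * E.ψ ω * Wm E * (Wm E)ᴴ * E.φ e)
      = (Wm E * ((Wm E)ᴴ * E.ψ ω * Wm E) * (Wm E)ᴴ) * E.φ e := by
    simp only [Matrix.mul_assoc]
  rw [h3, psi_Wm, E.pairing]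

lemma phiC_inj (E : QEmbedding M n) {e : V} (h : phiC E e = 0) : e = 0 := by
  apply (Module.forall_dual_apply_eq_zero_iff ℝ e).mp
  intro ω
  have := pairingC E ω e
  rw [h, Matrix.mul_zero, Matrix.trace_zero] at this
  exact_mod_cast this.symm

/-- the adjoint `B = ψcᵀ : Matrix → V` defined via the double dual. -/
noncomputable def Badj (E : QEmbedding M n) :
    Matrix (Fin (mm E)) (Fin (mm E)) ℂ →ₗ[ℝ] V :=
  (Module.evalEquiv ℝ V).symm.toLinearMap.comp
    ((LinearMap.mk₂ ℝ
      (fun (y : Matrix (Fin (mm E)) (Fin (mm E)) ℂ) (ω : Dual ℝ V) =>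
        ((psiC E ω * y).trace).re)
      (fun y z ω => by
        simp only [Matrix.mul_add, Matrix.trace_add, Complex.add_re])
      (fun c y ω => by
        simp only [Matrix.mul_smul, Matrix.trace_smul, Complex.real_smul, Complex.mul_re,
          Complex.ofReal_re, Complex.ofReal_im, zero_mul, sub_zero, smul_eq_mul])
      (fun y ω σ => by
        simp only [map_add, Matrix.add_mul, Matrix.trace_add, Complex.add_re])
      (fun c y ω => by
        simp only [_root_.map_smul, Matrix.smul_mul, Matrix.trace_smul, Complex.real_smul,
          Complex.mul_re, Complex.ofReal_re, Complex.ofReal_im, zero_mul, sub_zero, smul_eq_mul])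
      : Matrix (Fin (mm E)) (Fin (mm E)) ℂ →ₗ[ℝ] Dual ℝ V →ₗ[ℝ] ℝ))

lemma Badj_spec (E : QEmbedding M n) (y : Matrix (Fin (mm E)) (Fin (mm E)) ℂ)
    (ω : Dual ℝ V) : ω (Badj E y) = ((psiC E ω * y).trace).re := by
  unfold Badj
  set Φ : Dual ℝ (Dual ℝ V) := LinearMap.mk₂ ℝ
      (fun (y : Matrix (Fin (mm E)) (Fin (mm E)) ℂ) (ω : Dual ℝ V) =>
        ((psiC E ω * y).trace).re)
      (fun y z ω => by
        simp only [Matrix.mul_add, Matrix.trace_add, Complex.add_re])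
      (fun c y ω => by
        simp only [Matrix.mul_smul, Matrix.trace_smul, Complex.real_smul, Complex.mul_re,
          Complex.ofReal_re, Complex.ofReal_im, zero_mul, sub_zero, smul_eq_mul])
      (fun y ω σ => by
        simp only [map_add, Matrix.add_mul, Matrix.trace_add, Complex.add_re])
      (fun c y ω => by
        simp only [_root_.map_smul, Matrix.smul_mul, Matrix.trace_smul, Complex.real_smul,
          Complex.mul_re, Complex.ofReal_re, Complex.ofReal_im, zero_mul, sub_zero, smul_eq_mul]) y
    with hΦ
  have : ω ((Module.evalEquiv ℝ V).symm Φ)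
      = (Module.evalEquiv ℝ V ((Module.evalEquiv ℝ V).symm Φ)) ω := rfl
  rw [LinearMap.comp_apply]
  erw [this, LinearEquiv.apply_symm_apply]
  rfl

lemma Badj_phiC (E : QEmbedding M n) (e : V) : Badj E (phiC E e) = e := by
  apply eq_of_forall_dual_eq
  intro ω
  rw [Badj_spec, pairingC]
  simp

lemma Badj_pos (E : QEmbedding M n) {y : Matrix (Fin (mm E)) (Fin (mm E)) ℂ}
    (hy : y.PosSemidef) : Badj E y ∈ M.pos := by
  apply mem_pos_of_dual
  intro σ hσ
  rw [Badj_spec]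
  have h := psd_trace_mul_nonneg (psiC_psd E hσ) hy
  simpa using (Complex.le_def.mp h).1

/-- the compressed projection `P = φc ∘ B`. -/
noncomputable def Pc (E : QEmbedding M n) :
    Matrix (Fin (mm E)) (Fin (mm E)) ℂ →ₗ[ℝ] Matrix (Fin (mm E)) (Fin (mm E)) ℂ :=
  (phiC E).comp (Badj E)

lemma Pc_apply (E : QEmbedding M n) (y : Matrix (Fin (mm E)) (Fin (mm E)) ℂ) :
    Pc E y = phiC E (Badj E y) := rfl

lemma Pc_fix (E : QEmbedding M n) (e : V) : Pc E (phiC E e) = phiC E e := by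
  rw [Pc_apply, Badj_phiC]

lemma Pc_psd (E : QEmbedding M n) {y : Matrix (Fin (mm E)) (Fin (mm E)) ℂ}
    (hy : y.PosSemidef) : (Pc E y).PosSemidef :=
  phiC_psd E (Badj_pos E hy)

lemma Pc_one (E : QEmbedding M n) : Pc E 1 = 1 := by
  rw [← phiC_unit E, Pc_fix]

lemma psiC_herm (E : QEmbedding M n) (ω : Dual ℝ V) : (psiC E ω).IsHermitian := by
  rw [psiC_apply]
  exact Matrix.isHermitian_conjTranspose_mul_mul (Wm E) (E.ψ_herm ω)

/-- compression via `W` is compression via `U` restricted to the support block. -/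
lemma compress_eq (E : QEmbedding M n) (A : Matrix (Fin n) (Fin n) ℂ) :
    (Wm E)ᴴ * A * Wm E = (star (Ud E) * A * Ud E).submatrix (gg E) (gg E) := by
  have h1 : (Wm E)ᴴ = (star (Ud E)).submatrix (gg E) id := by
    rw [Wm, Matrix.conjTranspose_submatrix, Matrix.star_eq_conjTranspose]
  have h2 : Wm E = (Ud E).submatrix id (gg E) := rfl
  calc (Wm E)ᴴ * A * Wm E
      = (star (Ud E)).submatrix (gg E) ⇑(Equiv.refl (Fin n))
        * A.submatrix ⇑(Equiv.refl (Fin n)) id * Wm E := by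
        rw [Equiv.coe_refl, Matrix.submatrix_id_id, ← h1]
    _ = (star (Ud E) * A).submatrix (gg E) id * (Ud E).submatrix id (gg E) := by
        rw [Matrix.submatrix_mul_equiv, ← h2]
    _ = (star (Ud E) * A).submatrix (gg E) ⇑(Equiv.refl (Fin n))
        * (Ud E).submatrix ⇑(Equiv.refl (Fin n)) (gg E) := by rw [Equiv.coe_refl]
    _ = (star (Ud E) * A * Ud E).submatrix (gg E) (gg E) := by
        rw [Matrix.submatrix_mul_equiv]

/-- the compressed faithful invariant state `sc = ψc τ` is a PD diagonal matrix. -/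
lemma sc_diag (E : QEmbedding M n) :
    psiC E (tauD E) = Matrix.diagonal (fun j => (ev E (gg E j) : ℂ)) := by
  rw [psiC_apply]
  have h0 : (E.ψ (tauD E) : Matrix (Fin n) (Fin n) ℂ) = sZero E := rfl
  rw [h0, compress_eq]
  have hD : star (Ud E) * sZero E * Ud E = Matrix.diagonal (RCLike.ofReal ∘ ev E) := by
    rw [spectral_sZero]
    calc star (Ud E) * (Ud E * Matrix.diagonal (RCLike.ofReal ∘ ev E) * star (Ud E)) * Ud E
        = (star (Ud E) * Ud E) * Matrix.diagonal (RCLike.ofReal ∘ ev E)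
          * (star (Ud E) * Ud E) := by simp only [Matrix.mul_assoc]
      _ = Matrix.diagonal (RCLike.ofReal ∘ ev E) := by
          rw [(Ud_unitary E).1, Matrix.one_mul, Matrix.mul_one]
  rw [hD]
  ext j k
  by_cases hjk : j = k
  · subst hjk
    simp [Matrix.diagonal_apply_eq, Matrix.submatrix_apply]
  · rw [Matrix.submatrix_apply, Matrix.diagonal_apply_ne _ (fun hc => hjk (gg_inj E hc)),
      Matrix.diagonal_apply_ne _ hjk]

/-- trace against `sc` is invariant under `Pc`. -/
lemma sc_invariant (E : QEmbedding M n) (y : Matrix (Fin (mm E)) (Fin (mm E)) ℂ)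
    (hy : y.IsHermitian) :
    (psiC E (tauD E) * Pc E y).trace = (psiC E (tauD E) * y).trace := by
  rw [Pc_apply, pairingC]
  have h1 : tauD E (Badj E y) = ((psiC E (tauD E) * y).trace).re := Badj_spec E y (tauD E)
  rw [h1]
  exact trace_mul_herm_real (psiC_herm E (tauD E)) hy


end JordanAux

namespace JordanAux

open Matrix

variable {V : Type} [NormedAddCommGroup V] [NormedSpace ℝ V] [FiniteDimensional ℝ V]
  {M : ProbModel V} {n : ℕ}

lemma sum_mulVec' {k N : ℕ} (A : Fin N → Matrix (Fin k) (Fin k) ℂ) (v : Fin k → ℂ) :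
    (∑ j, A j) *ᵥ v = ∑ j, A j *ᵥ v := by
  ext i
  simp only [Matrix.mulVec, dotProduct, Finset.sum_apply, Matrix.sum_apply,
    Finset.sum_mul]
  exact Finset.sum_comm

lemma dot_sum' {k N : ℕ} (a : Fin k → ℂ) (w : Fin N → Fin k → ℂ) :
    a ⬝ᵥ (∑ j, w j) = ∑ j, a ⬝ᵥ w j := by
  simp only [dotProduct, Finset.sum_apply, Finset.mul_sum]
  exact Finset.sum_comm

lemma dot_sum_mulVec {k N : ℕ} (A : Fin N → Matrix (Fin k) (Fin k) ℂ) (a v : Fin k → ℂ) :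
    ∑ j, a ⬝ᵥ (A j *ᵥ v) = a ⬝ᵥ ((∑ j, A j) *ᵥ v) := by
  rw [sum_mulVec', dot_sum']

set_option maxHeartbeats 1000000 in
/-- Kadison–Schwarz inequality at fixed points: `P(x²) ≥ x²` for `x` in the range. -/
lemma kadison (E : QEmbedding M n) (e : V) :
    (Pc E (phiC E e * phiC E e) - phiC E e * phiC E e).PosSemidef := by
  set x := phiC E e with hxdef
  have hx : x.IsHermitian := phiC_herm E e
  set lam : Fin (mm E) → ℝ := hx.eigenvalues with hlam
  set U' : Matrix (Fin (mm E)) (Fin (mm E)) ℂ :=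
    (hx.eigenvectorUnitary : Matrix (Fin (mm E)) (Fin (mm E)) ℂ) with hU'
  have hU'1 : star U' * U' = 1 := Matrix.mem_unitaryGroup_iff'.mp hx.eigenvectorUnitary.2
  set pj : Fin (mm E) → Matrix (Fin (mm E)) (Fin (mm E)) ℂ :=
    fun j => U' * Matrix.diagonal (Pi.single j 1) * star U' with hpj
  have hpj_psd : ∀ j, (pj j).PosSemidef := by
    intro j
    have hd : (Matrix.diagonal (Pi.single j (1:ℂ))).PosSemidef := by
      refine Matrix.posSemidef_diagonal_iff.mpr fun i => ?_
      rcases eq_or_ne i j with h | h <;> simp [Pi.single_apply, h]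
    have h := hd.mul_mul_conjTranspose_same U'
    rwa [← Matrix.star_eq_conjTranspose] at h
  have hdiag_gen : ∀ (c : Fin (mm E) → ℝ),
      (∑ j, c j • Matrix.diagonal (Pi.single j (1:ℂ)))
        = Matrix.diagonal (fun i => (c i : ℂ)) := by
    intro c
    ext i i'
    rw [Matrix.sum_apply]
    by_cases h : i = i'
    · subst h
      simp [Matrix.diagonal_apply_eq, Pi.single_apply, Complex.real_smul]
    · simp [Matrix.diagonal_apply_ne _ h, Matrix.smul_apply]
  have hconj_smul : ∀ (c : Fin (mm E) → ℝ),
      (∑ j, c j • pj j)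
        = U' * Matrix.diagonal (fun i => (c i : ℂ)) * star U' := by
    intro c
    rw [← hdiag_gen c, Matrix.mul_sum, Matrix.sum_mul]
    apply Finset.sum_congr rfl
    intro j _
    simp only [hpj, Matrix.mul_smul, Matrix.smul_mul]
  have hsum_p : ∑ j, pj j = 1 := by
    have h := hconj_smul (fun _ => 1)
    simp only [one_smul] at h
    rw [h]
    have : Matrix.diagonal (fun _ : Fin (mm E) => ((1:ℝ):ℂ)) = 1 := by
      simp [Matrix.diagonal_one]
    rw [this, Matrix.mul_one]
    exact Matrix.mem_unitaryGroup_iff.mp hx.eigenvectorUnitary.2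
  have hspec : x = U' * Matrix.diagonal (fun i => (lam i : ℂ)) * star U' := by
    have hd : Matrix.diagonal (RCLike.ofReal ∘ lam) = Matrix.diagonal (fun i => (lam i : ℂ)) := by
      congr 1
    have h := hx.spectral_theorem
    rw [h, Unitary.conjStarAlgAut_apply, ← hd]
  have hsum_lam : ∑ j, lam j • pj j = x := by rw [hconj_smul lam, ← hspec]
  have hsum_lam2 : ∑ j, (lam j)^2 • pj j = x * x := by
    rw [hconj_smul (fun j => (lam j)^2)]
    have hcast : Matrix.diagonal (fun i => ((lam i ^ 2 : ℝ) : ℂ))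
        = Matrix.diagonal (fun i => ((lam i : ℂ))^2) := by
      congr 1
      funext i
      push_cast
      ring
    rw [hcast, hspec]
    calc U' * Matrix.diagonal (fun i => ((lam i : ℂ))^2) * star U'
        = U' * (Matrix.diagonal (fun i => ((lam i : ℝ) : ℂ))
          * Matrix.diagonal (fun i => ((lam i : ℝ) : ℂ))) * star U' := by
          rw [Matrix.diagonal_mul_diagonal]
          congr 1
          congr 1
          funext i
          simp [sq]
      _ = (U' * Matrix.diagonal (fun i => (lam i : ℂ)) * star U')
          * (U' * Matrix.diagonal (fun i => (lam i : ℂ)) * star U') := by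
          calc U' * (Matrix.diagonal (fun i => ((lam i : ℝ) : ℂ))
              * Matrix.diagonal (fun i => ((lam i : ℝ) : ℂ))) * star U'
              = U' * (Matrix.diagonal (fun i => ((lam i : ℝ) : ℂ)) * ((star U' * U')
                * Matrix.diagonal (fun i => ((lam i : ℝ) : ℂ)))) * star U' := by
                rw [hU'1, Matrix.one_mul]
            _ = (U' * Matrix.diagonal (fun i => (lam i : ℂ)) * star U')
              * (U' * Matrix.diagonal (fun i => (lam i : ℂ)) * star U') := by
                simp only [Matrix.mul_assoc]
  -- sums after applying Pc
  have hPsum : ∑ j, Pc E (pj j) = 1 := by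
    rw [← map_sum, hsum_p, Pc_one]
  have hPlam : ∑ j, lam j • Pc E (pj j) = x := by
    have : ∑ j, lam j • Pc E (pj j) = Pc E (∑ j, lam j • pj j) := by
      rw [map_sum]
      exact Finset.sum_congr rfl fun j _ => (_root_.map_smul (Pc E) (lam j) (pj j)).symm
    rw [this, hsum_lam, hxdef, Pc_fix]
  have hPlam2 : ∑ j, (lam j)^2 • Pc E (pj j) = Pc E (x * x) := by
    rw [← hsum_lam2, map_sum]
    exact Finset.sum_congr rfl fun j _ => (_root_.map_smul (Pc E) ((lam j)^2) (pj j)).symm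
  refine Matrix.PosSemidef.of_dotProduct_mulVec_nonneg ?_ ?_
  · have h1 : (Pc E (x * x)).IsHermitian := by rw [Pc_apply]; exact phiC_herm E _
    have h2 : (x * x).IsHermitian := by
      rw [Matrix.IsHermitian, Matrix.conjTranspose_mul, hx.eq]
    exact h1.sub h2
  · intro v
    set z := x *ᵥ v with hz
    have hvxz : ∀ w, star v ⬝ᵥ (x *ᵥ w) = star z ⬝ᵥ w := by
      intro w
      rw [Matrix.dotProduct_mulVec]
      congr 1
      have h := Matrix.star_mulVec (M := x) (v := v)
      rw [hx.eq] at h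
      exact h.symm
    have hterm : ∀ j : Fin (mm E),
        star (z - (lam j : ℂ) • v) ⬝ᵥ (Pc E (pj j) *ᵥ (z - (lam j : ℂ) • v))
        = star z ⬝ᵥ (Pc E (pj j) *ᵥ z) - (lam j : ℂ) * (star z ⬝ᵥ (Pc E (pj j) *ᵥ v))
          - (lam j : ℂ) * (star v ⬝ᵥ (Pc E (pj j) *ᵥ z))
          + (lam j : ℂ)^2 * (star v ⬝ᵥ (Pc E (pj j) *ᵥ v)) := by
      intro j
      simp only [star_sub, star_smul, Matrix.mulVec_sub, Matrix.mulVec_smul,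
        sub_dotProduct, dotProduct_sub, smul_dotProduct, dotProduct_smul, smul_eq_mul,
        Complex.star_def, Complex.conj_ofReal]
      ring
    have hA : ∑ j, star z ⬝ᵥ (Pc E (pj j) *ᵥ z) = star z ⬝ᵥ z := by
      rw [dot_sum_mulVec, hPsum, Matrix.one_mulVec]
    have hB : ∑ j, (lam j : ℂ) * (star z ⬝ᵥ (Pc E (pj j) *ᵥ v)) = star z ⬝ᵥ z := by
      have h1 : ∀ j : Fin (mm E), (lam j : ℂ) * (star z ⬝ᵥ (Pc E (pj j) *ᵥ v))
          = star z ⬝ᵥ ((lam j • Pc E (pj j)) *ᵥ v) := by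
        intro j
        rw [Matrix.smul_mulVec, dotProduct_smul]
        simp [Complex.real_smul]
      rw [Finset.sum_congr rfl (fun j _ => h1 j), dot_sum_mulVec, hPlam, ← hz]
    have hC : ∑ j, (lam j : ℂ) * (star v ⬝ᵥ (Pc E (pj j) *ᵥ z)) = star z ⬝ᵥ z := by
      have h1 : ∀ j : Fin (mm E), (lam j : ℂ) * (star v ⬝ᵥ (Pc E (pj j) *ᵥ z))
          = star v ⬝ᵥ ((lam j • Pc E (pj j)) *ᵥ z) := by
        intro j
        rw [Matrix.smul_mulVec, dotProduct_smul]
        simp [Complex.real_smul]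
      rw [Finset.sum_congr rfl (fun j _ => h1 j), dot_sum_mulVec, hPlam, hvxz]
    have hD : ∑ j, (lam j : ℂ)^2 * (star v ⬝ᵥ (Pc E (pj j) *ᵥ v))
        = star v ⬝ᵥ (Pc E (x * x) *ᵥ v) := by
      have h1 : ∀ j : Fin (mm E), (lam j : ℂ)^2 * (star v ⬝ᵥ (Pc E (pj j) *ᵥ v))
          = star v ⬝ᵥ (((lam j)^2 • Pc E (pj j)) *ᵥ v) := by
        intro j
        rw [Matrix.smul_mulVec, dotProduct_smul]
        simp only [Complex.real_smul, smul_eq_mul]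
        push_cast
        ring
      rw [Finset.sum_congr rfl (fun j _ => h1 j), dot_sum_mulVec, hPlam2]
    have hsum : ∑ j, star (z - (lam j : ℂ) • v) ⬝ᵥ (Pc E (pj j) *ᵥ (z - (lam j : ℂ) • v))
        = star v ⬝ᵥ (Pc E (x * x) *ᵥ v) - star z ⬝ᵥ z := by
      rw [Finset.sum_congr rfl (fun j _ => hterm j)]
      rw [Finset.sum_add_distrib, Finset.sum_sub_distrib, Finset.sum_sub_distrib]
      rw [hA, hB, hC, hD]
      ring
    have hgoal : star v ⬝ᵥ ((Pc E (x * x) - x * x) *ᵥ v)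
        = star v ⬝ᵥ (Pc E (x * x) *ᵥ v) - star z ⬝ᵥ z := by
      rw [Matrix.sub_mulVec, dotProduct_sub]
      congr 1
      rw [← Matrix.mulVec_mulVec, hvxz, hz]
    rw [hgoal, ← hsum]
    exact Finset.sum_nonneg fun j _ => (Pc_psd E (hpj_psd j)).dotProduct_mulVec_nonneg _

end JordanAux

namespace JordanAux

open Matrix

variable {V : Type} [NormedAddCommGroup V] [NormedSpace ℝ V] [FiniteDimensional ℝ V]
  {M : ProbModel V} {n : ℕ}

/-- the range of `φc` is closed under squares. -/
lemma sq_mem (E : QEmbedding M n) (e : V) :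
    phiC E (Badj E (phiC E e * phiC E e)) = phiC E e * phiC E e := by
  set x := phiC E e with hxdef
  have hK := kadison E e
  have hxh : x.IsHermitian := phiC_herm E e
  have hxxh : (x * x).IsHermitian := by
    rw [Matrix.IsHermitian, Matrix.conjTranspose_mul, hxh.eq]
  have htr : (psiC E (tauD E) * (Pc E (x * x) - x * x)).trace = 0 := by
    rw [Matrix.mul_sub, Matrix.trace_sub, sc_invariant E (x * x) hxxh, sub_self]
  set D' := Pc E (x * x) - x * x with hD'
  have htr2 : ∑ j, (ev E (gg E j) : ℂ) * D' j j = 0 := by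
    rw [← htr, sc_diag E, Matrix.trace]
    apply Finset.sum_congr rfl
    intro j _
    rw [Matrix.diag_apply, Matrix.diagonal_mul]
  have hterm_nonneg : ∀ j : Fin (mm E), 0 ≤ (ev E (gg E j) : ℂ) * D' j j := by
    intro j
    apply mul_nonneg
    · rw [Complex.zero_le_real]
      exact le_of_lt (ev_gg_pos E j)
    · exact psd_diag_nonneg hK j
  have hdiagzero : ∀ j, D' j j = 0 := by
    intro j
    have h := (Finset.sum_eq_zero_iff_of_nonneg
      (fun j _ => hterm_nonneg j)).mp htr2 j (Finset.mem_univ j)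
    rcases mul_eq_zero.mp h with h1 | h1
    · exfalso
      have := ev_gg_pos E j
      rw [Complex.ofReal_eq_zero] at h1
      linarith
    · exact h1
  have hDzero : D' = 0 := psd_eq_zero_of_diag_zero hK hdiagzero
  have := sub_eq_zero.mp hDzero
  rw [Pc_apply] at this
  exact this

lemma one_mem_range (E : QEmbedding M n) :
    (1 : Matrix (Fin (mm E)) (Fin (mm E)) ℂ) ∈ LinearMap.range (phiC E) :=
  ⟨M.unit, phiC_unit E⟩

lemma range_jordan_closed (E : QEmbedding M n) {x y : Matrix (Fin (mm E)) (Fin (mm E)) ℂ}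
    (hx : x ∈ LinearMap.range (phiC E)) (hy : y ∈ LinearMap.range (phiC E)) :
    x * y + y * x ∈ LinearMap.range (phiC E) := by
  obtain ⟨a, rfl⟩ := hx
  obtain ⟨b, rfl⟩ := hy
  have h1 : (phiC E a + phiC E b) * (phiC E a + phiC E b) ∈ LinearMap.range (phiC E) := by
    rw [← map_add]
    exact ⟨_, sq_mem E (a + b)⟩
  have h2 : phiC E a * phiC E a ∈ LinearMap.range (phiC E) := ⟨_, sq_mem E a⟩
  have h3 : phiC E b * phiC E b ∈ LinearMap.range (phiC E) := ⟨_, sq_mem E b⟩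
  have hxy : phiC E a * phiC E b + phiC E b * phiC E a
      = (phiC E a + phiC E b) * (phiC E a + phiC E b)
        - phiC E a * phiC E a - phiC E b * phiC E b := by
    noncomm_ring
  rw [hxy]
  exact Submodule.sub_mem _ (Submodule.sub_mem _ h1 h2) h3

lemma range_pow (E : QEmbedding M n) {c : Matrix (Fin (mm E)) (Fin (mm E)) ℂ}
    (hc : c ∈ LinearMap.range (phiC E)) : ∀ k : ℕ, c ^ k ∈ LinearMap.range (phiC E) := by
  intro k
  induction k with
  | zero => rw [pow_zero]; exact one_mem_range E
  | succ k ih =>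
      have h := range_jordan_closed E ih hc
      rw [← pow_succ, ← pow_succ'] at h
      have h2 : c ^ (k + 1) = (1/2 : ℝ) • (c ^ (k + 1) + c ^ (k + 1)) := by
        rw [← two_smul ℝ (c ^ (k+1)), smul_smul]
        norm_num
      rw [h2]
      exact Submodule.smul_mem _ _ h

end JordanAux

namespace JordanAux

open Matrix

variable {V : Type} [NormedAddCommGroup V] [NormedSpace ℝ V] [FiniteDimensional ℝ V]
  {M : ProbModel V} {n : ℕ}

set_option maxHeartbeats 1000000 in
/-- every positive element of the range has a square root in the range. -/
lemma sqrt_mem (E : QEmbedding M n) {a : V} (ha : a ∈ M.pos) :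
    ∃ x ∈ LinearMap.range (phiC E), phiC E a = x * x := by
  classical
  set c := phiC E a with hcdef
  have hcr : c ∈ LinearMap.range (phiC E) := ⟨a, rfl⟩
  have hc : c.PosSemidef := phiC_psd E ha
  set lamc : Fin (mm E) → ℝ := hc.1.eigenvalues with hlamc
  set U₀ : Matrix (Fin (mm E)) (Fin (mm E)) ℂ :=
    (hc.1.eigenvectorUnitary : Matrix (Fin (mm E)) (Fin (mm E)) ℂ) with hU₀
  have hU₀1 : star U₀ * U₀ = 1 := Matrix.mem_unitaryGroup_iff'.mp hc.1.eigenvectorUnitary.2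
  have hU₀2 : U₀ * star U₀ = 1 := Matrix.mem_unitaryGroup_iff.mp hc.1.eigenvectorUnitary.2
  have hspec : c = U₀ * Matrix.diagonal (fun i => (lamc i : ℂ)) * star U₀ := by
    have hd : Matrix.diagonal (RCLike.ofReal ∘ lamc)
        = Matrix.diagonal (fun i => (lamc i : ℂ)) := by congr 1
    have h := hc.1.spectral_theorem
    rw [h, Unitary.conjStarAlgAut_apply, ← hd]
  have hconj_mul : ∀ A B : Matrix (Fin (mm E)) (Fin (mm E)) ℂ,
      (U₀ * A * star U₀) * (U₀ * B * star U₀) = U₀ * (A * B) * star U₀ := by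
    intro A B
    have h : star U₀ * (U₀ * (B * star U₀)) = B * star U₀ := by
      rw [← Matrix.mul_assoc, hU₀1, Matrix.one_mul]
    calc (U₀ * A * star U₀) * (U₀ * B * star U₀)
        = U₀ * (A * (star U₀ * (U₀ * (B * star U₀)))) := by simp only [Matrix.mul_assoc]
      _ = U₀ * (A * (B * star U₀)) := by rw [h]
      _ = U₀ * (A * B) * star U₀ := by simp only [Matrix.mul_assoc]
  set x : Matrix (Fin (mm E)) (Fin (mm E)) ℂ :=
    U₀ * Matrix.diagonal (fun i => (Real.sqrt (lamc i) : ℂ)) * star U₀ with hxdef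
  have hxx : x * x = c := by
    rw [hxdef, hconj_mul, Matrix.diagonal_mul_diagonal, hspec]
    have hfun : (fun i : Fin (mm E) => (Real.sqrt (lamc i) : ℂ) * (Real.sqrt (lamc i) : ℂ))
        = fun i : Fin (mm E) => (lamc i : ℂ) := by
      funext i
      rw [← Complex.ofReal_mul, Real.mul_self_sqrt (hc.eigenvalues_nonneg i)]
    rw [hfun]
  -- powers of c conjugate diagonally
  have hpow : ∀ k : ℕ, c ^ k = U₀ * Matrix.diagonal (fun i => (lamc i : ℂ) ^ k) * star U₀ := by
    intro k
    induction k with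
    | zero =>
        simp only [pow_zero]
        have : Matrix.diagonal (fun _ : Fin (mm E) => (1 : ℂ)) = 1 := Matrix.diagonal_one
        rw [this, Matrix.mul_one, hU₀2]
    | succ k ih =>
        rw [pow_succ, ih, hspec, hconj_mul, Matrix.diagonal_mul_diagonal]
        have hfun : (fun i : Fin (mm E) => (lamc i : ℂ) ^ k * (lamc i : ℂ))
            = fun i : Fin (mm E) => (lamc i : ℂ) ^ (k + 1) := by
          funext i
          rw [pow_succ]
        rw [hfun]
  -- polynomial evaluation in the range
  set sfin : Finset ℝ := Finset.image lamc Finset.univ with hsfin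
  set q : Polynomial ℝ := Lagrange.interpolate sfin id Real.sqrt with hq
  have heval : ∀ i, q.eval (lamc i) = Real.sqrt (lamc i) := by
    intro i
    have hmem : lamc i ∈ sfin := Finset.mem_image_of_mem lamc (Finset.mem_univ i)
    have h := Lagrange.eval_interpolate_at_node (v := id) (r := Real.sqrt)
      (Set.injOn_id _) hmem
    exact h
  have hsum : ∑ k ∈ Finset.range (q.natDegree + 1), q.coeff k • c ^ k = x := by
    have h1 : ∀ k, q.coeff k • c ^ k
        = U₀ * (q.coeff k • Matrix.diagonal (fun i => (lamc i : ℂ) ^ k)) * star U₀ := by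
      intro k
      rw [hpow k, Matrix.mul_smul, Matrix.smul_mul]
    rw [Finset.sum_congr rfl (fun k _ => h1 k), ← Matrix.sum_mul, ← Matrix.mul_sum]
    have h2 : (∑ k ∈ Finset.range (q.natDegree + 1),
        q.coeff k • Matrix.diagonal (fun i => (lamc i : ℂ) ^ k))
        = Matrix.diagonal (fun i => (Real.sqrt (lamc i) : ℂ)) := by
      ext i i'
      rw [Matrix.sum_apply]
      by_cases h : i = i'
      · subst h
        simp only [Matrix.smul_apply, Matrix.diagonal_apply_eq]
        have h3 : ∑ k ∈ Finset.range (q.natDegree + 1), q.coeff k • (lamc i : ℂ) ^ k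
            = ((q.eval (lamc i) : ℝ) : ℂ) := by
          rw [Polynomial.eval_eq_sum_range]
          push_cast
          apply Finset.sum_congr rfl
          intro k _
          rw [Complex.real_smul]
        rw [h3, heval]
      · simp [Matrix.diagonal_apply_ne _ h]
    rw [h2, hxdef]
  have hxr : x ∈ LinearMap.range (phiC E) := by
    rw [← hsum]
    apply Submodule.sum_mem
    intro k _
    exact Submodule.smul_mem _ _ (range_pow E hcr k)
  exact ⟨x, hxr, hxx.symm⟩

end JordanAux

open JordanAux Matrix in
/-- **Main Theorem, 'only if' direction.** If a probabilistic model
`(A, A₊, u_A)` can be embedded into the quantum model `Q_n` for some `n`, then there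
are `m ∈ ℕ` and a real-linear subspace `J` of the `m × m` complex Hermitian matrices
with `I ∈ J`, `J` closed under the Jordan product, and a real-linear bijection
`T : A → J` with `T(u_A) = I` and `T(A₊) = {x² : x ∈ J}`; i.e. `A` is order-isomorphic
to a Euclidean special Jordan algebra with its cone of squares. -/
theorem embeddable_iff_jordan_onlyIf {V : Type} [NormedAddCommGroup V]
    [NormedSpace ℝ V] [FiniteDimensional ℝ V] (M : ProbModel V) (n : ℕ)
    (E : QEmbedding M n) :
    ∃ (m : ℕ) (J : Submodule ℝ (Matrix (Fin m) (Fin m) ℂ))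
      (T : V →ₗ[ℝ] Matrix (Fin m) (Fin m) ℂ),
        (∀ x ∈ J, Matrix.IsHermitian x)
        ∧ (1 : Matrix (Fin m) (Fin m) ℂ) ∈ J
        ∧ (∀ x ∈ J, ∀ y ∈ J, jordan x y ∈ J)
        ∧ Function.Injective T
        ∧ LinearMap.range T = J
        ∧ T M.unit = 1
        ∧ T '' M.pos = {y : Matrix (Fin m) (Fin m) ℂ | ∃ x ∈ J, y = x * x} := by
  classical
  refine ⟨mm E, LinearMap.range (phiC E), phiC E, ?_, one_mem_range E, ?_, ?_, rfl,
    phiC_unit E, ?_⟩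
  · rintro x ⟨e, rfl⟩
    exact phiC_herm E e
  · intro x hx y hy
    have h := range_jordan_closed E hx hy
    have h2 : jordan x y = (1/2 : ℝ) • (x * y + y * x) := by
      rw [jordan, ← algebraMap_smul ℂ ((1:ℝ)/2) (x * y + y * x)]
      norm_num
    rw [h2]
    exact Submodule.smul_mem _ _ h
  · intro a b hab
    have h1 : phiC E (a - b) = 0 := by rw [map_sub, hab, sub_self]
    exact sub_eq_zero.mp (phiC_inj E h1)
  · ext y
    constructor
    · rintro ⟨a, ha, rfl⟩
      obtain ⟨x, hxr, hxx⟩ := sqrt_mem E ha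
      exact ⟨x, hxr, hxx⟩
    · rintro ⟨x, hxr, rfl⟩
      obtain ⟨e, rfl⟩ := hxr
      refine ⟨Badj E (phiC E e * phiC E e), ?_, sq_mem E e⟩
      apply Badj_pos
      have hh : (phiC E e)ᴴ * phiC E e = phiC E e * phiC E e := by
        rw [(phiC_herm E e).eq]
      rw [← hh]
      exact Matrix.posSemidef_conjTranspose_mul_self _
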